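/- Let (E, j) be a soft inductive system of normed spaces. The set C(E, j) of j-convergent bounded nets is a closed linear subspace of the space ℕets(E) of uniformly bounded nets with the sup norm, and it contains all null nets and all basic nets (j_{nl} a_l)_{n} for fixed l and a_l ∈ E_l (where j_{nl} := 0 if n is not ≥ l and j_{ll} := id). -/

import Mathlib

open Filter Topology

section SoftSystems

variable {ι : Type*} [Preorder ι] {E : ι → Type*} [∀ n, NormedAddCommGroup (E n)]
  [∀ n, NormedSpace ℂ (E n)]

/-- A *soft inductive system* of normed spaces: the connecting maps `j n m : E m → E n`
(for `m ≤ n`) are linear contractions and are asymptotically transitive: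
`lim_m limsup_n ‖(j n l − j n m ∘ j m l) a‖ = 0` for every `l` and `a : E l`. -/
def IsSoftSystem (j : ∀ n m, E m →L[ℂ] E n) : Prop :=
  (∀ n m, m ≤ n → ‖j n m‖ ≤ 1) ∧
  ∀ (l : ι) (a : E l),
    Tendsto (fun m => limsup (fun n => ‖j n l a - j n m (j m l a)‖) atTop) atTop (𝓝 0)

/-- A net is *j-convergent* if `lim_m limsup_n ‖a n − j n m (a m)‖ = 0`. -/
def JConv (j : ∀ n m, E m →L[ℂ] E n) (a : ∀ n, E n) : Prop :=
  Tendsto (fun m => limsup (fun n => ‖a n - j n m (a m)‖) atTop) atTop (𝓝 0)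

/-- A net is *null* if its norms tend to zero along the directed index set. -/
def IsNullNet (a : ∀ n, E n) : Prop :=
  Tendsto (fun n => ‖a n‖) atTop (𝓝 0)

end SoftSystems

section LimsupHelpers

variable {ι : Type*} [Preorder ι] [Nonempty ι] [IsDirected ι (· ≤ ·)]

private lemma my_limsup_nonneg {u : ι → ℝ} (h0 : ∀ n, 0 ≤ u n) {c : ℝ} (hc : ∀ n, u n ≤ c) :
    0 ≤ limsup u atTop :=
  le_limsup_of_frequently_le (Frequently.of_forall h0) (isBoundedUnder_of ⟨c, hc⟩)

private lemma my_limsup_le {u : ι → ℝ} (h0 : ∀ n, 0 ≤ u n) {c : ℝ} (hc : ∀ n, u n ≤ c) :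
    limsup u atTop ≤ c :=
  limsup_le_of_le (isCoboundedUnder_le_of_le atTop h0) (Eventually.of_forall hc)

private lemma my_limsup_mono {u v : ι → ℝ} (h0 : ∀ n, 0 ≤ u n) {c : ℝ} (hv : ∀ n, v n ≤ c)
    (h : ∀ n, u n ≤ v n) : limsup u atTop ≤ limsup v atTop :=
  limsup_le_limsup (Eventually.of_forall h) (isCoboundedUnder_le_of_le atTop h0)
    (isBoundedUnder_of ⟨c, hv⟩)

private lemma my_limsup_add {u v : ι → ℝ} (h0u : ∀ n, 0 ≤ u n) {c : ℝ} (hcu : ∀ n, u n ≤ c)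
    (h0v : ∀ n, 0 ≤ v n) {d : ℝ} (hcv : ∀ n, v n ≤ d) :
    limsup (fun n => u n + v n) atTop ≤ limsup u atTop + limsup v atTop :=
  limsup_add_le (isBoundedUnder_of ⟨0, h0u⟩) (isBoundedUnder_of ⟨c, hcu⟩)
    (isCoboundedUnder_le_of_le atTop h0v) (isBoundedUnder_of ⟨d, hcv⟩)

private lemma my_limsup_const_add {u : ι → ℝ} (h0u : ∀ n, 0 ≤ u n) {c : ℝ} (hcu : ∀ n, u n ≤ c)
    (C : ℝ) : limsup (fun n => C + u n) atTop ≤ C + limsup u atTop := by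
  have h := limsup_add_le (f := (atTop : Filter ι)) (u := fun _ => C) (v := u)
    (isBoundedUnder_of ⟨C, fun _ => le_rfl⟩) (isBoundedUnder_of ⟨C, fun _ => le_rfl⟩)
    (isCoboundedUnder_le_of_le atTop h0u) (isBoundedUnder_of ⟨c, hcu⟩)
  rw [limsup_const] at h
  exact h

private lemma my_limsup_const_mul_le {u : ι → ℝ} (h0 : ∀ n, 0 ≤ u n) {c : ℝ} (hc : ∀ n, u n ≤ c)
    {k : ℝ} (hk : 0 ≤ k) :
    limsup (fun n => k * u n) atTop ≤ k * limsup u atTop := by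
  refine le_of_forall_pos_le_add fun ε hε => ?_
  have hb : IsBoundedUnder (· ≤ ·) (atTop : Filter ι) u := (isBoundedUnder_of ⟨c, hc⟩)
  have hlt : limsup u atTop < limsup u atTop + ε / (k + 1) := by
    have : (0:ℝ) < ε / (k + 1) := by positivity
    linarith
  have hev := eventually_lt_of_limsup_lt hlt hb
  refine limsup_le_of_le (isCoboundedUnder_le_of_le atTop fun n => mul_nonneg hk (h0 n)) ?_
  filter_upwards [hev] with n hn
  have h1 : k * u n ≤ k * (limsup u atTop + ε / (k + 1)) :=
    mul_le_mul_of_nonneg_left hn.le hk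
  have h2 : k * (ε / (k + 1)) ≤ ε := by
    rw [mul_div_assoc'] ; rw [div_le_iff₀ (by linarith)] ; nlinarith
  nlinarith [h1, h2]

end LimsupHelpers

/-- The set `C(E,j)` of j-convergent bounded nets is a closed linear subspace
of `ℕets(E) = lp E ⊤`; it contains all null nets and all basic nets `n ↦ j n l a` (with the
conventions `j n m = 0` for `n ≱ m` and `j n n = id`). -/
theorem stmt3 {ι : Type*} [Preorder ι] [Nonempty ι] [IsDirected ι (· ≤ ·)]
    {E : ι → Type*} [∀ n, NormedAddCommGroup (E n)] [∀ n, NormedSpace ℂ (E n)]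
    (j : ∀ n m, E m →L[ℂ] E n) (hj : IsSoftSystem j)
    (hzero : ∀ n m, ¬ m ≤ n → j n m = 0)
    (hid : ∀ n, j n n = ContinuousLinearMap.id ℂ (E n)) :
    ∃ C : Submodule ℂ (lp E ⊤),
      (C : Set (lp E ⊤)) = {f : lp E ⊤ | JConv j (fun n => f n)} ∧
      IsClosed (C : Set (lp E ⊤)) ∧
      (∀ f : lp E ⊤, IsNullNet (fun n => f n) → f ∈ C) ∧
      (∀ (l : ι) (a : E l) (f : lp E ⊤), (∀ n, f n = j n l a) → f ∈ C) := by
  classical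
  -- the connecting maps never increase norms
  have hcontr : ∀ n m (x : E m), ‖j n m x‖ ≤ ‖x‖ := by
    intro n m x
    by_cases h : m ≤ n
    · calc ‖j n m x‖ ≤ ‖j n m‖ * ‖x‖ := (j n m).le_opNorm x
        _ ≤ 1 * ‖x‖ := mul_le_mul_of_nonneg_right (hj.1 n m h) (norm_nonneg x)
        _ = ‖x‖ := one_mul _
    · rw [hzero n m h]; simp
  have hbound : ∀ (f : lp E ⊤) (n : ι), ‖f n‖ ≤ ‖f‖ := fun f n =>
    lp.norm_apply_le_norm ENNReal.top_ne_zero f n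
  -- uniform bound on the "defect" terms
  have key : ∀ (f : lp E ⊤) (m n : ι), ‖f n - j n m (f m)‖ ≤ 2 * ‖f‖ := by
    intro f m n
    calc ‖f n - j n m (f m)‖ ≤ ‖f n‖ + ‖j n m (f m)‖ := norm_sub_le _ _
      _ ≤ ‖f‖ + ‖f m‖ := add_le_add (hbound f n) (hcontr n m (f m))
      _ ≤ ‖f‖ + ‖f‖ := add_le_add_right (hbound f m) _
      _ = 2 * ‖f‖ := by ring
  refine ⟨{ carrier := {f : lp E ⊤ | JConv j (fun n => f n)},
            add_mem' := ?_, zero_mem' := ?_, smul_mem' := ?_ }, rfl, ?_, ?_, ?_⟩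
  · -- additivity
    intro a b ha hb
    show JConv j fun n => (a + b) n
    refine squeeze_zero'
      (Eventually.of_forall fun m =>
        my_limsup_nonneg (fun n => norm_nonneg _) (key (a + b) m))
      (Eventually.of_forall fun m => ?_) (by simpa using ha.add hb)
    have hpt : ∀ n, ‖(a + b) n - j n m ((a + b) m)‖ ≤
        ‖a n - j n m (a m)‖ + ‖b n - j n m (b m)‖ := by
      intro n
      have : (a + b) n - j n m ((a + b) m)
          = (a n - j n m (a m)) + (b n - j n m (b m)) := by
        have h1 : (a + b) n = a n + b n := by rw [lp.coeFn_add]; rfl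
        have h2 : (a + b) m = a m + b m := by rw [lp.coeFn_add]; rfl
        rw [h1, h2, map_add]; abel
      rw [this]; exact norm_add_le _ _
    calc limsup (fun n => ‖(a + b) n - j n m ((a + b) m)‖) atTop
        ≤ limsup (fun n => ‖a n - j n m (a m)‖ + ‖b n - j n m (b m)‖) atTop :=
          my_limsup_mono (fun n => norm_nonneg _)
            (fun n => add_le_add (key a m n) (key b m n)) hpt
      _ ≤ limsup (fun n => ‖a n - j n m (a m)‖) atTop
          + limsup (fun n => ‖b n - j n m (b m)‖) atTop :=
          my_limsup_add (fun n => norm_nonneg _) (key a m)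
            (fun n => norm_nonneg _) (key b m)
  · -- zero net
    show JConv j fun n => (0 : lp E ⊤) n
    have h : ∀ m : ι, limsup (fun n => ‖(0 : lp E ⊤) n - j n m ((0 : lp E ⊤) m)‖) atTop = 0 := by
      intro m
      have h0 : ∀ n : ι, (0 : lp E ⊤) n = 0 := fun n => by rw [lp.coeFn_zero]; rfl
      have : (fun n : ι => ‖(0 : lp E ⊤) n - j n m ((0 : lp E ⊤) m)‖) = fun _ => (0:ℝ) := by
        funext n; rw [h0, h0, map_zero, sub_zero, norm_zero]
      rw [this, limsup_const]
    unfold JConv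
    simp_rw [h]
    exact tendsto_const_nhds
  · -- scalar multiplication
    intro c a ha
    show JConv j fun n => (c • a) n
    refine squeeze_zero'
      (Eventually.of_forall fun m =>
        my_limsup_nonneg (fun n => norm_nonneg _) (key (c • a) m))
      (Eventually.of_forall fun m => ?_)
      (by simpa using ha.const_mul ‖c‖)
    have hpt : ∀ n, ‖(c • a) n - j n m ((c • a) m)‖ = ‖c‖ * ‖a n - j n m (a m)‖ := by
      intro n
      have h1 : (c • a) n = c • a n := by rw [lp.coeFn_smul]; rfl
      have h2 : (c • a) m = c • a m := by rw [lp.coeFn_smul]; rfl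
      rw [h1, h2, map_smul, ← smul_sub, norm_smul]
    calc limsup (fun n => ‖(c • a) n - j n m ((c • a) m)‖) atTop
        = limsup (fun n => ‖c‖ * ‖a n - j n m (a m)‖) atTop := by simp_rw [hpt]
      _ ≤ ‖c‖ * limsup (fun n => ‖a n - j n m (a m)‖) atTop :=
          my_limsup_const_mul_le (fun n => norm_nonneg _) (key a m) (norm_nonneg c)
  · -- closedness
    refine IsSeqClosed.isClosed ?_
    intro F f hF hFf
    show JConv j fun n => f n
    rw [JConv, tendsto_order]
    constructor
    · intro x hx
      exact Eventually.of_forall fun m =>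
        lt_of_lt_of_le hx (my_limsup_nonneg (fun n => norm_nonneg _) (key f m))
    · intro ε hε
      obtain ⟨k, hk⟩ := Metric.tendsto_atTop.1 hFf (ε/4) (by positivity)
      have hdist : ‖F k - f‖ < ε/4 := by
        have := hk k le_rfl; rwa [dist_eq_norm] at this
      have hev : ∀ᶠ m in atTop,
          limsup (fun n => ‖(F k) n - j n m ((F k) m)‖) atTop < ε/4 :=
        Filter.Tendsto.eventually_lt_const (by positivity : (0:ℝ) < ε/4) (hF k)
      filter_upwards [hev] with m hm
      have hsub : ∀ n : ι, ‖(F k) n - f n‖ ≤ ‖F k - f‖ := by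
        intro n
        have : (F k - f) n = (F k) n - f n := by rw [lp.coeFn_sub]; rfl
        rw [← this]; exact hbound (F k - f) n
      have hpt : ∀ n, ‖f n - j n m (f m)‖ ≤
          2 * ‖F k - f‖ + ‖(F k) n - j n m ((F k) m)‖ := by
        intro n
        have hdecomp : f n - j n m (f m) =
            (f n - (F k) n) + ((F k) n - j n m ((F k) m)) + (j n m ((F k) m) - j n m (f m)) := by
          abel
        calc ‖f n - j n m (f m)‖
            ≤ ‖(f n - (F k) n) + ((F k) n - j n m ((F k) m))‖
              + ‖j n m ((F k) m) - j n m (f m)‖ := by rw [hdecomp]; exact norm_add_le _ _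
          _ ≤ ‖f n - (F k) n‖ + ‖(F k) n - j n m ((F k) m)‖
              + ‖j n m ((F k) m) - j n m (f m)‖ :=
              add_le_add_left (norm_add_le _ _) _
          _ ≤ ‖F k - f‖ + ‖(F k) n - j n m ((F k) m)‖ + ‖F k - f‖ := by
              have e1 : ‖f n - (F k) n‖ ≤ ‖F k - f‖ := by
                rw [norm_sub_rev]; exact hsub n
              have e2 : ‖j n m ((F k) m) - j n m (f m)‖ ≤ ‖F k - f‖ := by
                rw [← map_sub]
                exact le_trans (hcontr n m _) (hsub m)
              exact add_le_add (add_le_add e1 le_rfl) e2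
          _ = 2 * ‖F k - f‖ + ‖(F k) n - j n m ((F k) m)‖ := by ring
      have hle : limsup (fun n => ‖f n - j n m (f m)‖) atTop ≤
          2 * ‖F k - f‖ + limsup (fun n => ‖(F k) n - j n m ((F k) m)‖) atTop := by
        calc limsup (fun n => ‖f n - j n m (f m)‖) atTop
            ≤ limsup (fun n => 2 * ‖F k - f‖ + ‖(F k) n - j n m ((F k) m)‖) atTop :=
              my_limsup_mono (fun n => norm_nonneg _)
                (fun n => add_le_add le_rfl (key (F k) m n)) hpt
          _ ≤ 2 * ‖F k - f‖ + limsup (fun n => ‖(F k) n - j n m ((F k) m)‖) atTop :=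
              my_limsup_const_add (fun n => norm_nonneg _) (key (F k) m) _
      calc limsup (fun n => ‖f n - j n m (f m)‖) atTop
          ≤ 2 * ‖F k - f‖ + limsup (fun n => ‖(F k) n - j n m ((F k) m)‖) atTop := hle
        _ < 2 * (ε/4) + ε/4 := by
            exact add_lt_add_of_le_of_lt (by linarith [hdist]) hm
        _ < ε := by linarith
  · -- null nets
    intro f hf
    show JConv j fun n => f n
    refine squeeze_zero'
      (Eventually.of_forall fun m =>
        my_limsup_nonneg (fun n => norm_nonneg _) (key f m))
      (Eventually.of_forall fun m => ?_) hf
    have hpt : ∀ n, ‖f n - j n m (f m)‖ ≤ ‖f n‖ + ‖f m‖ := by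
      intro n
      exact le_trans (norm_sub_le _ _) (add_le_add le_rfl (hcontr n m (f m)))
    calc limsup (fun n => ‖f n - j n m (f m)‖) atTop
        ≤ limsup (fun n => ‖f n‖ + ‖f m‖) atTop :=
          my_limsup_mono (fun n => norm_nonneg _)
            (fun n => add_le_add (hbound f n) (hbound f m)) hpt
      _ ≤ limsup (fun n => ‖f n‖) atTop + limsup (fun _ : ι => ‖f m‖) atTop :=
          my_limsup_add (fun n => norm_nonneg _) (hbound f)
            (fun _ => norm_nonneg _) (fun _ : ι => le_rfl)
      _ = 0 + ‖f m‖ := by rw [hf.limsup_eq, limsup_const]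
      _ = ‖f m‖ := zero_add _
  · -- basic nets
    intro l a f hfa
    show JConv j fun n => f n
    unfold JConv
    have h : (fun m => limsup (fun n => ‖f n - j n m (f m)‖) atTop)
        = fun m => limsup (fun n => ‖j n l a - j n m (j m l a)‖) atTop := by
      funext m; congr 1; funext n; rw [hfa n, hfa m]
    rw [h]
    exact hj.2 l a
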